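/- For all integers n and d with 1 ≤ d ≤ n/2, one has Σ_{i=0}^{d} C(n,i) < 0.98 · 2^{n·H(d/n)}. -/

import Mathlib

open Finset

/-- Binary entropy function (base 2). -/
noncomputable def binH (x : ℝ) : ℝ := -x * Real.logb 2 x - (1 - x) * Real.logb 2 (1 - x)

noncomputable def aB (n d i : ℕ) : ℝ := (n.choose i : ℝ) * ((d:ℝ)/n)^i * (1 - (d:ℝ)/n)^(n-i)

lemma aB_nonneg (n d i : ℕ) (hd : (d:ℝ) ≤ n) : 0 ≤ aB n d i := by
  have h1 : 0 ≤ (d:ℝ)/n := by positivity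
  have h2 : (d:ℝ)/n ≤ 1 := by
    rcases Nat.eq_zero_or_pos n with h|h
    · simp [h]
    · rw [div_le_one (by exact_mod_cast h)]; exact hd
  have : (0:ℝ) ≤ 1 - (d:ℝ)/n := by linarith
  unfold aB; positivity

lemma aB_eval (n d i : ℕ) : Polynomial.eval ((d:ℝ)/n) (bernsteinPolynomial ℝ n i) = aB n d i := by
  simp [bernsteinPolynomial, aB]

lemma sum_aB (n d : ℕ) : ∑ i ∈ Finset.range (n+1), aB n d i = 1 := by
  have h := congrArg (Polynomial.eval ((d:ℝ)/n)) (bernsteinPolynomial.sum ℝ n)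
  simpa [Polynomial.eval_finset_sum, aB_eval] using h

lemma var_aB (n d : ℕ) (hn : 0 < n) : ∑ i ∈ Finset.range (n+1), ((i:ℝ) - d)^2 * aB n d i = d * (1 - (d:ℝ)/n) := by
  have h := congrArg (Polynomial.eval ((d:ℝ)/n)) (bernsteinPolynomial.variance ℝ n)
  have hnp : (n:ℝ) * ((d:ℝ)/n) = d := by
    field_simp
  simp only [Polynomial.eval_finset_sum, Polynomial.eval_mul, Polynomial.eval_pow,
    Polynomial.eval_sub, Polynomial.eval_smul, Polynomial.eval_natCast, Polynomial.eval_X,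
    Polynomial.eval_one, nsmul_eq_mul, aB_eval, hnp] at h
  calc ∑ i ∈ Finset.range (n+1), ((i:ℝ) - d)^2 * aB n d i
      = ∑ i ∈ Finset.range (n+1), ((d:ℝ) - i)^2 * aB n d i := by
        apply Finset.sum_congr rfl; intro i _; ring_nf
    _ = (d:ℝ) * (1 - (d:ℝ)/n) := by rw [h]

lemma aB_step (n d k : ℕ) (hk : k < n) :
    ((k:ℝ)+1) * (1 - (d:ℝ)/n) * aB n d (k+1) = ((n:ℝ) - k) * ((d:ℝ)/n) * aB n d k := by
  have hc : ((n.choose (k+1) : ℝ)) * ((k:ℝ)+1) = (n.choose k : ℝ) * ((n:ℝ) - (k:ℝ)) := by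
    have h2 := congrArg (Nat.cast (R := ℝ)) (Nat.choose_succ_right_eq n k)
    push_cast [Nat.cast_sub hk.le] at h2
    linarith [h2]
  have hq : (1 - (d:ℝ)/n)^(n-k) = (1 - (d:ℝ)/n)^(n-(k+1)) * (1 - (d:ℝ)/n) := by
    rw [← pow_succ]; congr 1; omega
  unfold aB
  rw [hq, pow_succ]
  linear_combination (((d:ℝ)/n)^k * ((d:ℝ)/n) * (1 - (d:ℝ)/n)^(n-(k+1)) * (1 - (d:ℝ)/n)) * hc

lemma tail_first (n d : ℕ) (hn : 0 < n) (hdn : d + 1 ≤ n) :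
    ∑ i ∈ Ico (d+1) (n+1), ((i:ℝ) - d) * aB n d i
      = (d:ℝ) * (1 - (d:ℝ)/n) * aB n d d := by
  have hnp : (n:ℝ) * ((d:ℝ)/n) = d := by field_simp
  have base : ∑ i ∈ Ico n (n+1), ((i:ℝ) - d) * aB n d i
      = (n:ℝ) * (1 - (d:ℝ)/n) * aB n d n := by
    rw [Nat.Ico_succ_singleton, Finset.sum_singleton]
    have h1 : (n:ℝ) * (1 - (d:ℝ)/n) = (n:ℝ) - d := by field_simp
    rw [h1]
  have main : ∑ i ∈ Ico (d+1) (n+1), ((i:ℝ) - d) * aB n d i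
      = ((d:ℝ)+1) * (1 - (d:ℝ)/n) * aB n d (d+1) := by
    have := Nat.decreasingInduction'
      (P := fun k => ∑ i ∈ Ico k (n+1), ((i:ℝ) - d) * aB n d i
        = (k:ℝ) * (1 - (d:ℝ)/n) * aB n d k)
      (fun k hk _ ih => by
        show ∑ i ∈ Ico k (n+1), ((i:ℝ) - d) * aB n d i
          = (k:ℝ) * (1 - (d:ℝ)/n) * aB n d k
        have ih' : ∑ i ∈ Ico (k+1) (n+1), ((i:ℝ) - d) * aB n d i
          = ((k:ℝ)+1) * (1 - (d:ℝ)/n) * aB n d (k+1) := by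
          have : ((k+1:ℕ):ℝ) = (k:ℝ)+1 := by push_cast; ring
          simpa [this] using ih
        rw [Finset.sum_eq_sum_Ico_succ_bot (by omega : k < n+1), ih']
        linear_combination aB_step n d k hk + aB n d k * hnp) hdn base
    simpa using this
  rw [main, aB_step n d d (by omega)]
  linear_combination aB n d d * hnp

lemma aB_mode (n d : ℕ) (hd1 : 1 ≤ d) (hd2 : 2*d ≤ n) : ∀ i, aB n d i ≤ aB n d d := by
  have hn : 0 < n := by omega
  have hdn : (d:ℝ) ≤ n := by exact_mod_cast by omega
  have hnpos : (0:ℝ) < n := by exact_mod_cast hn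
  have hq : (0:ℝ) < 1 - (d:ℝ)/n := by
    rw [sub_pos, div_lt_one hnpos]
    exact_mod_cast by omega
  have hsub : (1 - (d:ℝ)/n) = ((n:ℝ)-d)/n := by field_simp
  have up : ∀ i, i < d → aB n d i ≤ aB n d (i+1) := by
    intro i hi
    have hkn : i < n := by omega
    have hi1 : (i:ℝ) + 1 ≤ d := by exact_mod_cast by omega
    have h2d : 2*(d:ℝ) ≤ n := by exact_mod_cast hd2
    have key : ((i:ℝ)+1) * (1 - (d:ℝ)/n) ≤ ((n:ℝ) - i) * ((d:ℝ)/n) := by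
      rw [hsub, ← mul_div_assoc, ← mul_div_assoc, div_le_div_iff_of_pos_right hnpos]
      nlinarith [mul_le_mul_of_nonneg_right hi1 (show (0:ℝ) ≤ (n:ℝ) - d by linarith),
        mul_le_mul_of_nonneg_left (show (n:ℝ) - d ≤ (n:ℝ) - i by linarith)
          (show (0:ℝ) ≤ d by positivity)]
    have pos : (0:ℝ) < ((i:ℝ)+1) * (1 - (d:ℝ)/n) := by positivity
    have h3 : ((i:ℝ)+1)*(1-(d:ℝ)/n) * aB n d i ≤ ((i:ℝ)+1)*(1-(d:ℝ)/n) * aB n d (i+1) := by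
      rw [aB_step n d i hkn]
      exact mul_le_mul_of_nonneg_right key (aB_nonneg n d i hdn)
    exact le_of_mul_le_mul_left h3 pos
  have down : ∀ i, d ≤ i → aB n d (i+1) ≤ aB n d i := by
    intro i hi
    rcases Nat.lt_or_ge i n with hkn | hkn
    · have hi1 : (d:ℝ) ≤ (i:ℝ) + 1 := by exact_mod_cast by omega
      have h2d : 2*(d:ℝ) ≤ n := by exact_mod_cast hd2
      have hin : (i:ℝ) ≤ n := by exact_mod_cast hkn.le
      have hdi : (d:ℝ) ≤ i := by exact_mod_cast hi
      have key : ((n:ℝ) - i) * ((d:ℝ)/n) ≤ ((i:ℝ)+1) * (1 - (d:ℝ)/n) := by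
        rw [hsub, ← mul_div_assoc, ← mul_div_assoc, div_le_div_iff_of_pos_right hnpos]
        nlinarith [mul_le_mul_of_nonneg_left (show (n:ℝ) - i ≤ (n:ℝ) - d by linarith)
            (show (0:ℝ) ≤ d by positivity),
          mul_le_mul_of_nonneg_right hi1 (show (0:ℝ) ≤ (n:ℝ) - d by linarith)]
      have pos : (0:ℝ) < ((i:ℝ)+1) * (1 - (d:ℝ)/n) := by positivity
      have h3 : ((i:ℝ)+1)*(1-(d:ℝ)/n) * aB n d (i+1) ≤ ((i:ℝ)+1)*(1-(d:ℝ)/n) * aB n d i := by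
        rw [aB_step n d i hkn]
        exact mul_le_mul_of_nonneg_right key (aB_nonneg n d i hdn)
      exact le_of_mul_le_mul_left h3 pos
    · have : n.choose (i+1) = 0 := Nat.choose_eq_zero_of_lt (by omega)
      have hz : aB n d (i+1) = 0 := by unfold aB; rw [this]; simp
      rw [hz]; exact aB_nonneg n d i hdn
  have upall : ∀ j, j ≤ d → aB n d (d - j) ≤ aB n d d := by
    intro j
    induction j with
    | zero => simp
    | succ j ih =>
      intro hj
      have h1 : d - (j+1) < d := by omega
      have h2 : d - (j+1) + 1 = d - j := by omega
      calc aB n d (d - (j+1)) ≤ aB n d (d - (j+1) + 1) := up _ h1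
        _ = aB n d (d - j) := by rw [h2]
        _ ≤ aB n d d := ih (by omega)
  have downall : ∀ j, aB n d (d + j) ≤ aB n d d := by
    intro j
    induction j with
    | zero => simp
    | succ j ih =>
      have : d + (j+1) = (d + j) + 1 := by omega
      rw [this]
      exact (down (d+j) (by omega)).trans ih
  intro i
  rcases Nat.le_total i d with h | h
  · have : i = d - (d - i) := by omega
    rw [this]; exact upall (d-i) (by omega)
  · have : i = d + (i - d) := by omega
    rw [this]; exact downall (i-d)

lemma aB_anticonc (n d : ℕ) (hd1 : 1 ≤ d) (hd2 : 2*d ≤ n) :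
    1 ≤ (4*Real.sqrt ((d:ℝ)*(1-(d:ℝ)/n)) + 1) * aB n d d + 1/4 := by
  have hn : 0 < n := by omega
  have hdn : (d:ℝ) ≤ n := by exact_mod_cast by omega
  have hnpos : (0:ℝ) < n := by exact_mod_cast hn
  have hq : (0:ℝ) < 1 - (d:ℝ)/n := by
    rw [sub_pos, div_lt_one hnpos]; exact_mod_cast by omega
  set v : ℝ := (d:ℝ)*(1-(d:ℝ)/n) with hv
  have hvpos : 0 < v := by
    apply mul_pos _ hq; exact_mod_cast hd1
  set s : ℝ := Real.sqrt v with hs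
  have hspos : 0 < s := Real.sqrt_pos.mpr hvpos
  have hs2 : s^2 = v := Real.sq_sqrt hvpos.le
  set t : ℕ := ⌊2*s⌋₊ with ht
  have hts : (t:ℝ) ≤ 2*s := Nat.floor_le (by positivity)
  have hmnn : 0 ≤ aB n d d := aB_nonneg n d d hdn
  -- split
  have hsplit := (Finset.sum_filter_add_sum_filter_not (Finset.range (n+1))
    (fun i : ℕ => ((i:ℝ)-(d:ℝ))^2 ≤ 4*v) (fun i => aB n d i)).symm
  -- near part
  have hnear : ∑ i ∈ (Finset.range (n+1)).filter (fun i : ℕ => ((i:ℝ)-(d:ℝ))^2 ≤ 4*v), aB n d i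
      ≤ (4*s + 1) * aB n d d := by
    have hsubset : (Finset.range (n+1)).filter (fun i : ℕ => ((i:ℝ)-(d:ℝ))^2 ≤ 4*v)
        ⊆ Finset.Icc (d - t) (d + t) := by
      intro i hi
      simp only [Finset.mem_filter, Finset.mem_range] at hi
      obtain ⟨-, hP⟩ := hi
      have habs : |(i:ℝ) - d| ≤ 2*s := by
        have h1 : |(i:ℝ) - d| = Real.sqrt (((i:ℝ)-d)^2) := (Real.sqrt_sq_eq_abs _).symm
        rw [h1]
        calc Real.sqrt (((i:ℝ)-d)^2) ≤ Real.sqrt ((2*s)^2) := by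
              apply Real.sqrt_le_sqrt; nlinarith
          _ = 2*s := Real.sqrt_sq (by positivity)
      rw [abs_le] at habs
      simp only [Finset.mem_Icc]
      constructor
      · -- d - t ≤ i
        rcases Nat.le_total i d with h | h
        · have : ((d - i : ℕ):ℝ) ≤ 2*s := by
            rw [Nat.cast_sub h]; linarith [habs.1]
          have := Nat.le_floor this
          omega
        · omega
      · rcases Nat.le_total d i with h | h
        · have : ((i - d : ℕ):ℝ) ≤ 2*s := by
            rw [Nat.cast_sub h]; linarith [habs.2]
          have := Nat.le_floor this
          omega
        · omega
    calc ∑ i ∈ (Finset.range (n+1)).filter (fun i : ℕ => ((i:ℝ)-(d:ℝ))^2 ≤ 4*v), aB n d i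
        ≤ ∑ _i ∈ (Finset.range (n+1)).filter (fun i : ℕ => ((i:ℝ)-(d:ℝ))^2 ≤ 4*v), aB n d d := by
          apply Finset.sum_le_sum; intro i _; exact aB_mode n d hd1 hd2 i
      _ = ((Finset.range (n+1)).filter (fun i : ℕ => ((i:ℝ)-(d:ℝ))^2 ≤ 4*v)).card * aB n d d := by
          rw [Finset.sum_const, nsmul_eq_mul]
      _ ≤ (2*(t:ℝ)+1) * aB n d d := by
          apply mul_le_mul_of_nonneg_right _ hmnn
          have hc := Finset.card_le_card hsubset
          have hcc : (Finset.Icc (d - t) (d + t)).card ≤ 2*t + 1 := by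
            rw [Nat.card_Icc]; omega
          have : ((Finset.range (n+1)).filter (fun i : ℕ => ((i:ℝ)-(d:ℝ))^2 ≤ 4*v)).card ≤ 2*t+1 := le_trans hc hcc
          calc (((Finset.range (n+1)).filter (fun i : ℕ => ((i:ℝ)-(d:ℝ))^2 ≤ 4*v)).card : ℝ)
              ≤ ((2*t+1 : ℕ):ℝ) := by exact_mod_cast this
            _ = 2*(t:ℝ)+1 := by push_cast; ring
      _ ≤ (4*s + 1) * aB n d d := by
          apply mul_le_mul_of_nonneg_right _ hmnn; linarith
  -- far part
  have hfar : ∑ i ∈ (Finset.range (n+1)).filter (fun i : ℕ => ¬ ((i:ℝ)-(d:ℝ))^2 ≤ 4*v), aB n d i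
      ≤ 1/4 := by
    have step1 : ∑ i ∈ (Finset.range (n+1)).filter (fun i : ℕ => ¬ ((i:ℝ)-(d:ℝ))^2 ≤ 4*v), aB n d i
        ≤ ∑ i ∈ (Finset.range (n+1)).filter (fun i : ℕ => ¬ ((i:ℝ)-(d:ℝ))^2 ≤ 4*v),
            (((i:ℝ)-d)^2 / (4*v)) * aB n d i := by
      apply Finset.sum_le_sum
      intro i hi
      simp only [Finset.mem_filter, not_le] at hi
      have h1 : 1 ≤ ((i:ℝ)-d)^2 / (4*v) := by
        rw [le_div_iff₀ (by positivity)]; linarith [hi.2]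
      nlinarith [aB_nonneg n d i hdn]
    have step2 : ∑ i ∈ (Finset.range (n+1)).filter (fun i : ℕ => ¬ ((i:ℝ)-(d:ℝ))^2 ≤ 4*v),
            (((i:ℝ)-d)^2 / (4*v)) * aB n d i
        ≤ ∑ i ∈ Finset.range (n+1), (((i:ℝ)-d)^2 / (4*v)) * aB n d i := by
      apply Finset.sum_le_sum_of_subset_of_nonneg (Finset.filter_subset _ _)
      intro i _ _
      have := aB_nonneg n d i hdn
      positivity
    have step3 : ∑ i ∈ Finset.range (n+1), (((i:ℝ)-d)^2 / (4*v)) * aB n d i = 1/4 := by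
      have : ∑ i ∈ Finset.range (n+1), (((i:ℝ)-d)^2 / (4*v)) * aB n d i
          = (1/(4*v)) * ∑ i ∈ Finset.range (n+1), ((i:ℝ)-d)^2 * aB n d i := by
        rw [Finset.mul_sum]; apply Finset.sum_congr rfl; intro i _; ring
      rw [this, var_aB n d hn, ← hv]
      field_simp
    linarith
  calc (1:ℝ) = ∑ i ∈ Finset.range (n+1), aB n d i := (sum_aB n d).symm
    _ = _ := hsplit
    _ ≤ (4*s + 1) * aB n d d + 1/4 := by exact add_le_add hnear hfar

lemma tail_mass (n d : ℕ) (hd1 : 1 ≤ d) (hd2 : 2*d ≤ n) :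
    (d:ℝ)*(1-(d:ℝ)/n) * (aB n d d)^2 ≤ ∑ i ∈ Ico (d+1) (n+1), aB n d i := by
  have hn : 0 < n := by omega
  have hdn : (d:ℝ) ≤ n := by exact_mod_cast by omega
  have hnpos : (0:ℝ) < n := by exact_mod_cast hn
  have hq : (0:ℝ) < 1 - (d:ℝ)/n := by
    rw [sub_pos, div_lt_one hnpos]; exact_mod_cast by omega
  set v : ℝ := (d:ℝ)*(1-(d:ℝ)/n) with hv
  have hvpos : 0 < v := by
    apply mul_pos _ hq; exact_mod_cast hd1
  have hCS := Finset.sum_mul_sq_le_sq_mul_sq (Finset.Ico (d+1) (n+1))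
    (fun i : ℕ => ((i:ℝ)-(d:ℝ)) * Real.sqrt (aB n d i))
    (fun i : ℕ => Real.sqrt (aB n d i))
  have hfg : ∑ i ∈ Finset.Ico (d+1) (n+1),
      (((i:ℝ)-(d:ℝ)) * Real.sqrt (aB n d i)) * Real.sqrt (aB n d i)
      = v * aB n d d := by
    rw [← tail_first n d hn (by omega)]
    apply Finset.sum_congr rfl
    intro i _
    rw [mul_assoc, Real.mul_self_sqrt (aB_nonneg n d i hdn)]
  have hf2 : ∑ i ∈ Finset.Ico (d+1) (n+1),
      (((i:ℝ)-(d:ℝ)) * Real.sqrt (aB n d i))^2 ≤ v := by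
    have heq : ∀ i ∈ Finset.Ico (d+1) (n+1),
        (((i:ℝ)-(d:ℝ)) * Real.sqrt (aB n d i))^2 = ((i:ℝ)-(d:ℝ))^2 * aB n d i := by
      intro i _
      rw [mul_pow, Real.sq_sqrt (aB_nonneg n d i hdn)]
    rw [Finset.sum_congr rfl heq, hv, ← var_aB n d hn]
    apply Finset.sum_le_sum_of_subset_of_nonneg
    · intro i hi
      simp only [Finset.mem_Ico, Finset.mem_range] at *
      omega
    · intro i _ _
      have := aB_nonneg n d i hdn
      positivity
  have hg2 : ∑ i ∈ Finset.Ico (d+1) (n+1), (Real.sqrt (aB n d i))^2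
      = ∑ i ∈ Finset.Ico (d+1) (n+1), aB n d i := by
    apply Finset.sum_congr rfl
    intro i _
    exact Real.sq_sqrt (aB_nonneg n d i hdn)
  rw [hfg, hg2] at hCS
  have hTnn : 0 ≤ ∑ i ∈ Finset.Ico (d+1) (n+1), aB n d i :=
    Finset.sum_nonneg fun i _ => aB_nonneg n d i hdn
  have h2 : (v * aB n d d)^2 ≤ v * ∑ i ∈ Finset.Ico (d+1) (n+1), aB n d i := by
    calc (v * aB n d d)^2 ≤ (∑ i ∈ Finset.Ico (d+1) (n+1),
          (((i:ℝ)-(d:ℝ)) * Real.sqrt (aB n d i))^2) * ∑ i ∈ Finset.Ico (d+1) (n+1), aB n d i := hCS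
      _ ≤ v * ∑ i ∈ Finset.Ico (d+1) (n+1), aB n d i :=
          mul_le_mul_of_nonneg_right hf2 hTnn
  nlinarith [sq_nonneg (aB n d d), hvpos]

lemma two_rpow_H (n d : ℕ) (hd1 : 1 ≤ d) (h2d : 2*d ≤ n) :
    (2:ℝ) ^ ((n:ℝ) * binH ((d:ℝ)/n)) = (((d:ℝ)/n)^d * (1-(d:ℝ)/n)^(n-d))⁻¹ := by
  have hn : 0 < n := by omega
  have hnpos : (0:ℝ) < n := by exact_mod_cast hn
  have hp : (0:ℝ) < (d:ℝ)/n := by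
    apply div_pos _ hnpos; exact_mod_cast hd1
  have hq : (0:ℝ) < 1 - (d:ℝ)/n := by
    rw [sub_pos, div_lt_one hnpos]; exact_mod_cast by omega
  have h1 : (n:ℝ)*((d:ℝ)/n) = d := by field_simp
  have hH : (n:ℝ) * binH ((d:ℝ)/n)
      = (-((d:ℝ) * Real.logb 2 ((d:ℝ)/n))) + (-(((n:ℝ)-d) * Real.logb 2 (1-(d:ℝ)/n))) := by
    unfold binH
    linear_combination (Real.logb 2 (1 - (d:ℝ)/n) - Real.logb 2 ((d:ℝ)/n)) * h1
  rw [hH, Real.rpow_add (by norm_num : (0:ℝ) < 2)]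
  have e1 : (2:ℝ) ^ (-((d:ℝ) * Real.logb 2 ((d:ℝ)/n))) = (((d:ℝ)/n)^d)⁻¹ := by
    rw [Real.rpow_neg (by norm_num : (0:ℝ) ≤ 2), mul_comm,
      Real.rpow_mul (by norm_num : (0:ℝ) ≤ 2),
      Real.rpow_logb (by norm_num) (by norm_num) hp, Real.rpow_natCast]
  have e2 : (2:ℝ) ^ (-(((n:ℝ)-d) * Real.logb 2 (1-(d:ℝ)/n))) = ((1-(d:ℝ)/n)^(n-d))⁻¹ := by
    have hc : ((n:ℝ) - d) = ((n-d : ℕ):ℝ) := by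
      rw [Nat.cast_sub (by omega)]
    rw [hc, Real.rpow_neg (by norm_num : (0:ℝ) ≤ 2), mul_comm,
      Real.rpow_mul (by norm_num : (0:ℝ) ≤ 2),
      Real.rpow_logb (by norm_num) (by norm_num) hq, Real.rpow_natCast]
  rw [e1, e2, mul_inv]

set_option maxHeartbeats 1000000 in
/-- For `1 ≤ d ≤ n/2`, `Σ_{i=0}^d C(n,i) < 0.98 · 2^(n·H(d/n))`. -/
theorem stmt5 (n d : ℕ) (hd1 : 1 ≤ d) (hd2 : (d : ℝ) ≤ (n : ℝ) / 2) :
    (∑ i ∈ Finset.range (d + 1), (n.choose i : ℝ))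
      < 0.98 * (2 : ℝ) ^ ((n : ℝ) * binH ((d : ℝ) / (n : ℝ))) := by
  have h2d : 2*d ≤ n := by
    have h1 : (2*d:ℝ) ≤ n := by push_cast; linarith
    exact_mod_cast h1
  have hn : 0 < n := by omega
  have hnpos : (0:ℝ) < n := by exact_mod_cast hn
  have hdn : (d:ℝ) ≤ n := by exact_mod_cast by omega
  have hp : (0:ℝ) < (d:ℝ)/n := by
    apply div_pos _ hnpos; exact_mod_cast hd1
  have hq : (0:ℝ) < 1 - (d:ℝ)/n := by
    rw [sub_pos, div_lt_one hnpos]; exact_mod_cast by omega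
  have hpq : (d:ℝ)/n ≤ 1 - (d:ℝ)/n := by
    have h2 : (d:ℝ)/n + (d:ℝ)/n ≤ 1 := by
      rw [← add_div, div_le_one hnpos]; exact_mod_cast (by omega : d + d ≤ n)
    linarith
  set X : ℝ := ((d:ℝ)/n)^d * (1-(d:ℝ)/n)^(n-d) with hX
  have hXpos : 0 < X := by positivity
  rw [two_rpow_H n d hd1 h2d, ← div_eq_mul_inv, lt_div_iff₀ hXpos]
  -- termwise bound
  have hterm : (∑ i ∈ Finset.range (d + 1), (n.choose i : ℝ)) * X
      ≤ ∑ i ∈ Finset.range (d+1), aB n d i := by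
    rw [Finset.sum_mul]
    apply Finset.sum_le_sum
    intro i hi
    have hid : i ≤ d := by simp at hi; omega
    have hmono : X ≤ ((d:ℝ)/n)^i * (1-(d:ℝ)/n)^(n-i) := by
      have e : ((d:ℝ)/n)^d = ((d:ℝ)/n)^i * ((d:ℝ)/n)^(d-i) := by
        rw [← pow_add]; congr 1; omega
      have e2 : (1-(d:ℝ)/n)^(n-i) = (1-(d:ℝ)/n)^(n-d) * (1-(d:ℝ)/n)^(d-i) := by
        rw [← pow_add]; congr 1; omega
      have hpow : ((d:ℝ)/n)^(d-i) ≤ (1-(d:ℝ)/n)^(d-i) :=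
        pow_le_pow_left₀ hp.le hpq _
      rw [hX, e, e2]
      calc ((d:ℝ)/n)^i * ((d:ℝ)/n)^(d-i) * (1-(d:ℝ)/n)^(n-d)
          ≤ ((d:ℝ)/n)^i * (1-(d:ℝ)/n)^(d-i) * (1-(d:ℝ)/n)^(n-d) := by
            apply mul_le_mul_of_nonneg_right _ (by positivity)
            exact mul_le_mul_of_nonneg_left hpow (by positivity)
        _ = ((d:ℝ)/n)^i * ((1-(d:ℝ)/n)^(n-d) * (1-(d:ℝ)/n)^(d-i)) := by ring
    calc (n.choose i : ℝ) * X ≤ (n.choose i : ℝ) * (((d:ℝ)/n)^i * (1-(d:ℝ)/n)^(n-i)) :=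
          mul_le_mul_of_nonneg_left hmono (by positivity)
      _ = aB n d i := by rw [aB]; ring
  -- split the total sum
  have hsplit : ∑ i ∈ Finset.range (d+1), aB n d i
      = 1 - ∑ i ∈ Ico (d+1) (n+1), aB n d i := by
    have := Finset.sum_range_add_sum_Ico (fun i => aB n d i) (show d+1 ≤ n+1 by omega)
    rw [sum_aB n d] at this
    linarith
  have h98 : (0.98:ℝ) = 49/50 := by norm_num
  rcases Nat.lt_or_ge d 2 with hdlt | hdge
  · -- d = 1
    have hd1' : d = 1 := by omega
    subst hd1'
    have hn2 : 2 ≤ n := by omega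
    have hn2r : (2:ℝ) ≤ n := by exact_mod_cast hn2
    -- Bernoulli : q^(n-1) ≤ 1/2
    have hb : (2:ℝ) ≤ (1 + 1/((n:ℝ)-1))^(n-1) := by
      have h := one_add_mul_le_pow (a := 1/((n:ℝ)-1)) (by linarith [one_div_nonneg.mpr (show (0:ℝ) ≤ (n:ℝ)-1 by linarith)] : (-2:ℝ) ≤ 1/((n:ℝ)-1)) (n-1)
      have hc : ((n-1:ℕ):ℝ) = (n:ℝ)-1 := by rw [Nat.cast_sub (by omega)]; norm_num
      rw [hc] at h
      have : ((n:ℝ)-1) * (1/((n:ℝ)-1)) = 1 := by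
        rw [mul_one_div, div_self (ne_of_gt (by linarith : (0:ℝ) < (n:ℝ)-1))]
      rw [this] at h
      linarith
    have hqval : 1 - (1:ℝ)/n = ((n:ℝ)-1)/n := by field_simp
    have hq2 : (1 - (1:ℝ)/n)^(n-1) ≤ 1/2 := by
      have hA : (0:ℝ) < (1 + 1/((n:ℝ)-1))^(n-1) := by positivity
      have hprod : (1 - (1:ℝ)/n)^(n-1) * (1 + 1/((n:ℝ)-1))^(n-1) = 1 := by
        rw [← mul_pow]
        have hne : ((n:ℝ)-1) ≠ 0 := ne_of_gt (by linarith)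
        have hnne : (n:ℝ) ≠ 0 := ne_of_gt hnpos
        have : (1 - (1:ℝ)/n) * (1 + 1/((n:ℝ)-1)) = 1 := by
          field_simp
          ring
        rw [this, one_pow]
      nlinarith [pow_nonneg (by linarith [hqval] : (0:ℝ) ≤ 1 - (1:ℝ)/n) (n-1)]
    have hsum2 : (∑ i ∈ Finset.range (1 + 1), (n.choose i : ℝ)) = 1 + n := by
      simp [Finset.sum_range_succ]
    rw [hsum2, hX]
    push_cast
    have hXeq : ((1:ℝ)/n)^1 * (1-(1:ℝ)/n)^(n-1) ≤ (1/n) * (1/2) := by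
      rw [pow_one]
      apply mul_le_mul_of_nonneg_left hq2 (by positivity)
    calc (1 + (n:ℝ)) * (((1:ℝ)/n)^1 * (1-(1:ℝ)/n)^(n-1))
        ≤ (1 + (n:ℝ)) * ((1/n) * (1/2)) := by
          apply mul_le_mul_of_nonneg_left hXeq (by positivity)
      _ = (1 + (n:ℝ))/(2*n) := by ring
      _ ≤ 3/4 := by
          rw [div_le_iff₀ (by positivity)]
          nlinarith
      _ < 0.98 := by norm_num
  · -- d ≥ 2
    set v : ℝ := (d:ℝ)*(1-(d:ℝ)/n) with hv
    have hd2r : (2:ℝ) ≤ d := by exact_mod_cast hdge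
    have hqhalf : (1:ℝ)/2 ≤ 1 - (d:ℝ)/n := by linarith
    have hv1 : (1:ℝ) ≤ v := by
      rw [hv]; nlinarith
    set s : ℝ := Real.sqrt v with hs
    have hs1 : (1:ℝ) ≤ s := by
      rw [hs, show (1:ℝ) = Real.sqrt 1 from Real.sqrt_one.symm]
      exact Real.sqrt_le_sqrt hv1
    have hs2 : s^2 = v := Real.sq_sqrt (by linarith)
    set m : ℝ := aB n d d with hm
    have hmnn : 0 ≤ m := aB_nonneg n d d hdn
    have hanti := aB_anticonc n d hd1 h2d
    rw [← hv, ← hs, ← hm] at hanti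
    have h34 : 3/4 ≤ (4*s+1)*m := by linarith
    have h5s : (4*s+1)*m ≤ 5*s*m := by nlinarith
    have hsm : 3/20 ≤ s*m := by nlinarith
    have hT : 9/400 ≤ ∑ i ∈ Ico (d+1) (n+1), aB n d i := by
      have := tail_mass n d hd1 h2d
      rw [← hv, ← hm] at this
      nlinarith [sq_nonneg (s*m)]
    calc (∑ i ∈ Finset.range (d + 1), (n.choose i : ℝ)) * X
        ≤ ∑ i ∈ Finset.range (d+1), aB n d i := hterm
      _ = 1 - ∑ i ∈ Ico (d+1) (n+1), aB n d i := hsplit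
      _ ≤ 1 - 9/400 := by linarith
      _ < 0.98 := by norm_num
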